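/- arXiv:2110.03294 — 2 statements merged into one kernel-verified Lean document; each statement's English description precedes it below -/
import Mathlib

section
/- Let $r : \mathbb{R}^d \to \mathbb{R}$ be convex, $f : \mathbb{R}^d \to \mathbb{R}$ be $L$-smooth, $\gamma > 0$, $v \in \mathbb{R}^d$, $x \in \mathbb{R}^d$, and let $x^+ = \mathrm{prox}_{\gamma r}(x - \gamma v)$ where $\mathrm{prox}_{\gamma r}(y) = \arg\min_{u}\{r(u) + \frac{1}{2\gamma}\|u - y\|^2\}$. Then for any $\lambda > 0$, with $\Phi = f + r$: $\Phi(x^+) \leq \Phi(x) + \frac{1}{2\lambda}\|v - \nabla f(x)\|^2 - \left(\frac{1}{\gamma} - \frac{L}{2} - \frac{\lambda}{2}\right)\|x^+ - x\|^2$. -/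
set_option maxHeartbeats 1000000

open InnerProductSpace

local notation "⟪" a ", " b "⟫" => @inner ℝ _ _ a b

/-- Descent lemma: `L`-Lipschitz gradient gives quadratic upper bound. -/
lemma descent_aux (d : ℕ) (f : EuclideanSpace ℝ (Fin d) → ℝ)
    (f' : EuclideanSpace ℝ (Fin d) → EuclideanSpace ℝ (Fin d))
    (L : ℝ) (hgrad : ∀ x, HasGradientAt f (f' x) x)
    (hlip : ∀ x y, ‖f' x - f' y‖ ≤ L * ‖x - y‖)
    (x w : EuclideanSpace ℝ (Fin d)) :
    f (x + w) ≤ f x + ⟪f' x, w⟫ + L / 2 * ‖w‖ ^ 2 := by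
  set g : ℝ → ℝ := fun t => f (x + t • w) - t * ⟪f' x, w⟫ - L * t ^ 2 / 2 * ‖w‖ ^ 2 with hg
  have hderiv : ∀ t : ℝ, HasDerivAt g
      (⟪f' (x + t • w), w⟫ - ⟪f' x, w⟫ - L * t * ‖w‖ ^ 2) t := by
    intro t
    have h1 : HasDerivAt (fun t : ℝ => x + t • w) w t := by
      simpa using (HasDerivAt.const_add x ((hasDerivAt_id t).smul_const w))
    have h2 : HasDerivAt (fun t : ℝ => f (x + t • w)) (⟪f' (x + t • w), w⟫) t := by
      have := ((hgrad (x + t • w)).hasFDerivAt).comp_hasDerivAt t h1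
      simp at this
      exact this
    have h3 : HasDerivAt (fun t : ℝ => t * ⟪f' x, w⟫) (⟪f' x, w⟫) t := by
      simpa using (hasDerivAt_id t).mul_const (⟪f' x, w⟫)
    have h4 : HasDerivAt (fun t : ℝ => L * t ^ 2 / 2 * ‖w‖ ^ 2) (L * t * ‖w‖ ^ 2) t := by
      have h5 : HasDerivAt (fun t : ℝ => t ^ 2) (2 * t) t := by
        simpa using hasDerivAt_pow 2 t
      have := ((h5.const_mul L).div_const 2).mul_const (‖w‖ ^ 2)
      exact this.congr_deriv (by ring)
    exact (h2.sub h3).sub h4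
  have hanti : AntitoneOn g (Set.Icc 0 1) := by
    apply antitoneOn_of_deriv_nonpos (convex_Icc 0 1)
    · exact fun t _ => ((hderiv t).continuousAt).continuousWithinAt
    · intro t _
      exact (hderiv t).differentiableAt.differentiableWithinAt
    · intro t ht
      rw [interior_Icc] at ht
      rw [(hderiv t).deriv]
      have hb : ⟪f' (x + t • w) - f' x, w⟫ ≤ ‖f' (x + t • w) - f' x‖ * ‖w‖ :=
        real_inner_le_norm _ _
      have hl : ‖f' (x + t • w) - f' x‖ ≤ L * (t * ‖w‖) := by
        have := hlip (x + t • w) x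
        simpa [norm_smul, abs_of_pos ht.1, mul_assoc] using this
      have hwn : (0 : ℝ) ≤ ‖w‖ := norm_nonneg _
      have hi : ⟪f' (x + t • w), w⟫ - ⟪f' x, w⟫ = ⟪f' (x + t • w) - f' x, w⟫ := by
        rw [inner_sub_left]
      rw [hi]
      nlinarith [hb, hl, hwn]
  have := hanti (Set.left_mem_Icc.mpr zero_le_one) (Set.right_mem_Icc.mpr zero_le_one)
    zero_le_one
  simp only [hg] at this
  simp only [zero_smul, add_zero, one_smul, zero_mul, zero_pow, mul_zero, sub_zero,
    one_mul, one_pow, zero_div, mul_one] at this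
  nlinarith [this]

theorem stmt_7 (d : ℕ) (r f : EuclideanSpace ℝ (Fin d) → ℝ)
    (hr : ConvexOn ℝ Set.univ r)
    (f' : EuclideanSpace ℝ (Fin d) → EuclideanSpace ℝ (Fin d))
    (L : ℝ) (hgrad : ∀ x, HasGradientAt f (f' x) x)
    (hlip : ∀ x y, ‖f' x - f' y‖ ≤ L * ‖x - y‖)
    (γ : ℝ) (hγ : 0 < γ) (v x xp : EuclideanSpace ℝ (Fin d))
    (hprox : ∀ u : EuclideanSpace ℝ (Fin d),
      r xp + (1 / (2 * γ)) * ‖xp - (x - γ • v)‖ ^ 2 ≤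
        r u + (1 / (2 * γ)) * ‖u - (x - γ • v)‖ ^ 2)
    (lam : ℝ) (hlam : 0 < lam) :
    f xp + r xp ≤ f x + r x + (1 / (2 * lam)) * ‖v - f' x‖ ^ 2
      - (1 / γ - L / 2 - lam / 2) * ‖xp - x‖ ^ 2 := by
  set w : EuclideanSpace ℝ (Fin d) := xp - x with hw
  set y : EuclideanSpace ℝ (Fin d) := x - γ • v with hy
  -- descent lemma
  have hdesc : f xp ≤ f x + ⟪f' x, w⟫ + L / 2 * ‖w‖ ^ 2 := by
    have := descent_aux d f f' L hgrad hlip x w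
    simpa [hw] using this
  -- prox inequality in the limit
  set A : ℝ := r x - r xp + (1 / γ) * ⟪xp - y, x - xp⟫ with hA
  set B : ℝ := (1 / (2 * γ)) * ‖x - xp‖ ^ 2 with hB
  have hBnn : 0 ≤ B := by positivity
  have key : ∀ t : ℝ, 0 < t → t ≤ 1 → 0 ≤ A + t * B := by
    intro t ht0 ht1
    have hcvx := hr.2 (Set.mem_univ xp) (Set.mem_univ x)
      (by linarith : (0:ℝ) ≤ 1 - t) (le_of_lt ht0) (by ring)
    simp only [smul_eq_mul] at hcvx
    have hproxt := hprox ((1 - t) • xp + t • x)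
    have hexp : ‖((1 - t) • xp + t • x) - y‖ ^ 2 =
        ‖xp - y‖ ^ 2 + 2 * t * ⟪xp - y, x - xp⟫ + t ^ 2 * ‖x - xp‖ ^ 2 := by
      have h1 : ((1 - t) • xp + t • x) - y = (xp - y) + t • (x - xp) := by
        module
      rw [h1, norm_add_sq_real, real_inner_smul_right, norm_smul]
      simp [mul_pow, sq_abs]
      ring
    rw [hexp] at hproxt
    have hγ' : (0 : ℝ) < 1 / (2 * γ) := by positivity
    have h2 : 0 ≤ t * (r x - r xp) + (1 / (2 * γ)) *
        (2 * t * ⟪xp - y, x - xp⟫ + t ^ 2 * ‖x - xp‖ ^ 2) := by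
      nlinarith [hproxt, hcvx]
    have heq : t * (A + t * B) = t * (r x - r xp) + (1 / (2 * γ)) *
        (2 * t * ⟪xp - y, x - xp⟫ + t ^ 2 * ‖x - xp‖ ^ 2) := by
      rw [hA, hB]
      field_simp
      ring
    have h4 : t * 0 ≤ t * (A + t * B) := by rw [heq]; simpa using h2
    exact le_of_mul_le_mul_left h4 ht0
  have hAnn : 0 ≤ A := by
    by_contra hAneg
    push_neg at hAneg
    rcases eq_or_lt_of_le hBnn with hB0 | hBpos
    · have := key 1 one_pos le_rfl
      nlinarith
    · set t := min 1 (-A / (2 * B)) with ht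
      have htB : 0 < -A / (2 * B) := div_pos (by linarith) (by linarith)
      have ht0 : 0 < t := lt_min one_pos htB
      have ht1 : t ≤ 1 := min_le_left _ _
      have hk := key t ht0 ht1
      rcases min_cases 1 (-A / (2 * B)) with ⟨he, hle⟩ | ⟨he, hlt⟩
      · rw [ht, he] at hk
        have h5 : 2 * B ≤ -A := by
          rw [le_div_iff₀ (by linarith)] at hle
          linarith
        nlinarith
      · rw [ht, he] at hk
        have h6 : -A / (2 * B) * B = -A / 2 := by
          field_simp
        nlinarith
  -- rewrite A
  have hinA : ⟪xp - y, x - xp⟫ = -‖xp - x‖ ^ 2 + γ * ⟪v, x - xp⟫ := by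
    have h1 : xp - y = (xp - x) + γ • v := by rw [hy]; module
    rw [h1, inner_add_left, real_inner_smul_left]
    have h2 : ⟪xp - x, x - xp⟫ = -⟪xp - x, xp - x⟫ := by
      rw [← inner_neg_right]
      congr 1
      module
    rw [h2, real_inner_self_eq_norm_sq]
  have hrbound : r xp ≤ r x - (1 / γ) * ‖xp - x‖ ^ 2 + ⟪v, x - xp⟫ := by
    rw [hA, hinA] at hAnn
    have hγne : γ ≠ 0 := ne_of_gt hγ
    have h7 : (1 / γ) * (-‖xp - x‖ ^ 2 + γ * ⟪v, x - xp⟫) =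
        -(1 / γ) * ‖xp - x‖ ^ 2 + ⟪v, x - xp⟫ := by
      field_simp
    rw [h7] at hAnn
    linarith
  -- Young's inequality
  have hyoung : ⟪f' x - v, w⟫ ≤ (1 / (2 * lam)) * ‖f' x - v‖ ^ 2 + lam / 2 * ‖w‖ ^ 2 := by
    have hcs : ⟪f' x - v, w⟫ ≤ ‖f' x - v‖ * ‖w‖ := real_inner_le_norm _ _
    have h := sq_nonneg (‖f' x - v‖ - lam * ‖w‖)
    have hlam' : (0:ℝ) < 2 * lam := by linarith
    have h8 : ‖f' x - v‖ * ‖w‖ ≤ (1 / (2 * lam)) * ‖f' x - v‖ ^ 2 + lam / 2 * ‖w‖ ^ 2 := by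
      rw [← sub_nonneg]
      have heq2 : (1:ℝ) / (2 * lam) * ‖f' x - v‖ ^ 2 + lam / 2 * ‖w‖ ^ 2 - ‖f' x - v‖ * ‖w‖ =
          (‖f' x - v‖ - lam * ‖w‖) ^ 2 / (2 * lam) := by
        field_simp
        ring
      rw [heq2]
      positivity
    linarith
  have hnorm : ‖v - f' x‖ = ‖f' x - v‖ := norm_sub_rev _ _
  have hwx : ⟪v, x - xp⟫ = -⟪v, w⟫ := by
    have h9 : x - xp = -w := by rw [hw]; module
    rw [h9, inner_neg_right]
  have hsplit : ⟪f' x, w⟫ - ⟪v, w⟫ = ⟪f' x - v, w⟫ := by rw [inner_sub_left]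
  rw [hnorm]
  have hww : ‖xp - x‖ = ‖w‖ := by rw [hw]
  rw [hww]
  nlinarith [hdesc, hrbound, hyoung, hwx, hsplit]
end

section
/- Let $\theta \in (0,1]$, $\mu > 0$, and $\gamma \leq \frac{\theta}{2\mu}$, $\gamma > 0$. Suppose nonnegative sequences $\{\delta^t\}$, $\{G^t\}$, $\{R^t\}$ satisfy, for all $t$: $\delta^{t+1} \leq (1-\gamma\mu)\delta^t - (\frac{1}{2\gamma} - \frac{L}{2})R^t + \frac{\gamma}{2}G^t$ and $G^{t+1} \leq (1-\theta)G^t + \beta\tilde{L}^2 R^t$, where $L, \beta, \tilde{L} \geq 0$ and $\gamma$ additionally satisfies $\frac{2\beta\tilde{L}^2\gamma^2}{\theta} + L\gamma \leq 1$. Then the Lyapunov sequence $\Psi^t = \delta^t + \frac{\gamma}{\theta}G^t$ satisfies $\Psi^T \leq (1-\gamma\mu)^T \Psi^0$ for all $T \geq 0$. -/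
theorem stmt_15 (θ μ γ L β Ltil : ℝ) (hθ0 : 0 < θ) (hθ1 : θ ≤ 1) (hμ : 0 < μ)
    (hγ0 : 0 < γ) (hγ : γ ≤ θ / (2 * μ))
    (hL : 0 ≤ L) (hβ : 0 ≤ β) (hLtil : 0 ≤ Ltil)
    (hstep : 2 * β * Ltil ^ 2 * γ ^ 2 / θ + L * γ ≤ 1)
    (δ G R : ℕ → ℝ) (hδ : ∀ t, 0 ≤ δ t) (hG : ∀ t, 0 ≤ G t) (hR : ∀ t, 0 ≤ R t)
    (hrec1 : ∀ t, δ (t + 1) ≤ (1 - γ * μ) * δ t - (1 / (2 * γ) - L / 2) * R t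
      + (γ / 2) * G t)
    (hrec2 : ∀ t, G (t + 1) ≤ (1 - θ) * G t + β * Ltil ^ 2 * R t) :
    ∀ T : ℕ, δ T + (γ / θ) * G T ≤ (1 - γ * μ) ^ T * (δ 0 + (γ / θ) * G 0) := by
  have hγμ : γ * μ ≤ θ / 2 := by
    have := mul_le_mul_of_nonneg_right hγ hμ.le
    calc γ * μ ≤ θ / (2 * μ) * μ := this
    _ = θ / 2 := by field_simp
  have h1 : 0 ≤ 1 - γ * μ := by linarith
  have key : ∀ t, δ (t + 1) + (γ / θ) * G (t + 1) ≤
      (1 - γ * μ) * (δ t + (γ / θ) * G t) := by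
    intro t
    have h2 := hrec1 t
    have h3 := mul_le_mul_of_nonneg_left (hrec2 t) (by positivity : (0:ℝ) ≤ γ / θ)
    -- coefficient of R is ≤ 0
    have hRcoef : (γ / θ) * (β * Ltil ^ 2) ≤ 1 / (2 * γ) - L / 2 := by
      have hstep' : 2 * β * Ltil ^ 2 * γ ^ 2 + L * γ * θ ≤ θ := by
        rw [div_add' _ _ _ (ne_of_gt hθ0)] at hstep
        have := (div_le_one hθ0).mp hstep
        linarith
      have e1 : 1 / (2 * γ) - L / 2 = (θ - L * γ * θ) / (2 * γ * θ) := by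
        field_simp
      have e2 : γ / θ * (β * Ltil ^ 2) = (2 * β * Ltil ^ 2 * γ ^ 2) / (2 * γ * θ) := by
        field_simp
      rw [e1, e2]
      exact (div_le_div_iff_of_pos_right (by positivity)).mpr (by linarith)
    calc δ (t + 1) + (γ / θ) * G (t + 1)
        ≤ ((1 - γ * μ) * δ t - (1 / (2 * γ) - L / 2) * R t + γ / 2 * G t)
          + (γ / θ) * ((1 - θ) * G t + β * Ltil ^ 2 * R t) := add_le_add h2 h3
      _ = (1 - γ * μ) * δ t + (γ / θ - γ / 2) * G t
          + ((γ / θ) * (β * Ltil ^ 2) - (1 / (2 * γ) - L / 2)) * R t := by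
          field_simp; ring
      _ ≤ (1 - γ * μ) * δ t + ((1 - γ * μ) * (γ / θ)) * G t + 0 * R t := by
          have hGc : γ / θ - γ / 2 ≤ (1 - γ * μ) * (γ / θ) := by
            have h : γ * μ * (γ / θ) ≤ γ / 2 := by
              calc γ * μ * (γ / θ) ≤ θ / 2 * (γ / θ) :=
                    mul_le_mul_of_nonneg_right hγμ (le_of_lt (div_pos hγ0 hθ0))
                _ = γ / 2 := by field_simp
            nlinarith [h]
          have hRc : γ / θ * (β * Ltil ^ 2) - (1 / (2 * γ) - L / 2) ≤ 0 := by
            linarith [hRcoef]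
          have hm1 := mul_le_mul_of_nonneg_right hGc (hG t)
          have hm2 := mul_nonpos_of_nonpos_of_nonneg hRc (hR t)
          nlinarith [hm1, hm2]
      _ = (1 - γ * μ) * (δ t + (γ / θ) * G t) := by ring
  intro T
  induction T with
  | zero => simp
  | succ n ih =>
    calc δ (n + 1) + (γ / θ) * G (n + 1) ≤ (1 - γ * μ) * (δ n + (γ / θ) * G n) := key n
    _ ≤ (1 - γ * μ) * ((1 - γ * μ) ^ n * (δ 0 + (γ / θ) * G 0)) :=
        mul_le_mul_of_nonneg_left ih h1
    _ = (1 - γ * μ) ^ (n + 1) * (δ 0 + (γ / θ) * G 0) := by ring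
end
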